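/- Let D ⊆ ℤ^S be an arbitrary nonempty set with |S| ≥ 2 and let φ: ℤ → ℝ be |S|-increasing. Then an element m ∈ D is decreasingly minimal in D if and only if m minimizes Φ(x) = Σ_{s∈S} φ(x(s)) over D. -/

import Mathlib

open Finset

/-- `x` rearranged in increasing order. -/
noncomputable def sortAsc {n : ℕ} (x : Fin n → ℤ) : Fin n → ℤ :=
  fun i => x (Tuple.sort x i)

/-- `x` rearranged in decreasing order (the vector `x↓`). -/
noncomputable def sortDesc {n : ℕ} (x : Fin n → ℤ) : Fin n → ℤ :=
  fun i => sortAsc x i.rev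

/-- `x̄(k)`: the sum of the `k` largest components of `x`. -/
noncomputable def psum {n : ℕ} (x : Fin n → ℤ) (k : ℕ) : ℤ :=
  ∑ i : Fin n, if (i : ℕ) < k then sortDesc x i else 0

/-- `x ≺ y`: `x` is majorized by `y`. -/
def Majorize {n : ℕ} (x y : Fin n → ℤ) : Prop :=
  (∀ k : ℕ, k < n → psum x k ≤ psum y k) ∧ psum x n = psum y n

/-- `x` and `y` are value-equivalent: `x↓ = y↓`. -/
def ValueEquiv {n : ℕ} (x y : Fin n → ℤ) : Prop :=
  sortDesc x = sortDesc y

/-- `x ≤_dec y`: `x` is decreasingly smaller than or value-equivalent to `y`. -/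
def DecLE {n : ℕ} (x y : Fin n → ℤ) : Prop :=
  ValueEquiv x y ∨
    ∃ j : Fin n, (∀ i : Fin n, i < j → sortDesc x i = sortDesc y i) ∧
      sortDesc x j < sortDesc y j

/-- `x <_dec y`: `x` is decreasingly smaller than `y`. -/
def DecLT {n : ℕ} (x y : Fin n → ℤ) : Prop :=
  ∃ j : Fin n, (∀ i : Fin n, i < j → sortDesc x i = sortDesc y i) ∧
    sortDesc x j < sortDesc y j

/-- `x ≥_inc y`: `x` is increasingly larger than or value-equivalent to `y`. -/
def IncGE {n : ℕ} (x y : Fin n → ℤ) : Prop :=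
  ValueEquiv x y ∨
    ∃ j : Fin n, (∀ i : Fin n, i < j → sortAsc x i = sortAsc y i) ∧
      sortAsc x j > sortAsc y j

/-- `x` is a least majorized element of `D`. -/
def LeastMajorized {n : ℕ} (D : Set (Fin n → ℤ)) (x : Fin n → ℤ) : Prop :=
  x ∈ D ∧ ∀ y ∈ D, Majorize x y

/-- `x` is a decreasingly minimal (dec-min) element of `D`. -/
def DecMin {n : ℕ} (D : Set (Fin n → ℤ)) (x : Fin n → ℤ) : Prop :=
  x ∈ D ∧ ∀ y ∈ D, DecLE x y

/-- `x` is an increasingly maximal (inc-max) element of `D`. -/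
def IncMax {n : ℕ} (D : Set (Fin n → ℤ)) (x : Fin n → ℤ) : Prop :=
  x ∈ D ∧ ∀ y ∈ D, IncGE x y

lemma sortDesc_sum {n : ℕ} (φ : ℤ → ℝ) (x : Fin n → ℤ) :
    ∑ s : Fin n, φ (x s) = ∑ i : Fin n, φ (sortDesc x i) := by
  rw [← Equiv.sum_comp (Fin.revPerm.trans (Tuple.sort x)) (fun i => φ (x i))]
  rfl

lemma sortDesc_anti {n : ℕ} (x : Fin n → ℤ) {i k : Fin n} (h : i ≤ k) :
    sortDesc x k ≤ sortDesc x i :=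
  Tuple.monotone_sort x (Fin.rev_le_rev.mpr h)

lemma key_sum_lt {n : ℕ} (hn : 2 ≤ n) (φ : ℤ → ℝ)
    (hφ1 : ∀ k : ℤ, (n : ℝ) * φ k ≤ φ (k + 1)) (hpos : ∀ k : ℤ, 0 < φ k)
    (hmono : ∀ k l : ℤ, k ≤ l → φ k ≤ φ l)
    (a b : Fin n → ℤ) (ha : ∀ i k : Fin n, i ≤ k → a k ≤ a i)
    (j : Fin n) (heq : ∀ i : Fin n, i < j → a i = b i) (hlt : a j < b j) :
    ∑ i : Fin n, φ (a i) < ∑ i : Fin n, φ (b i) := by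
  rw [← Finset.sum_filter_add_sum_filter_not univ (· < j) (fun i => φ (a i)),
      ← Finset.sum_filter_add_sum_filter_not univ (· < j) (fun i => φ (b i))]
  have heq1 : ∑ i ∈ univ.filter (· < j), φ (a i) = ∑ i ∈ univ.filter (· < j), φ (b i) := by
    apply Finset.sum_congr rfl
    intro i hi
    rw [heq i (by simpa using hi)]
  rw [heq1]
  apply add_lt_add_right
  set S := univ.filter (fun i => ¬ i < j) with hS
  have hjS : j ∈ S := by simp [hS]
  have hLHS : ∑ i ∈ S, φ (a i) ≤ (S.card : ℝ) * φ (a j) := by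
    calc ∑ i ∈ S, φ (a i) ≤ ∑ _i ∈ S, φ (a j) := by
          apply Finset.sum_le_sum
          intro i hi
          exact hmono _ _ (ha j i (not_lt.mp (by simpa [hS] using hi)))
      _ = (S.card : ℝ) * φ (a j) := by rw [Finset.sum_const, nsmul_eq_mul]
  have hcard : S.card ≤ n := by
    simpa using (Finset.card_le_univ S).trans_eq (by simp)
  have h2 : (2 : ℝ) ≤ (n : ℝ) := by exact_mod_cast hn
  have hstep : (n : ℝ) * φ (a j) ≤ φ (b j) :=
    (hφ1 (a j)).trans (hmono _ _ (by omega))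
  have hRHS : φ (b j) ≤ ∑ i ∈ S, φ (b i) := by
    rw [← Finset.add_sum_erase S _ hjS]
    have : 0 ≤ ∑ i ∈ S.erase j, φ (b i) :=
      Finset.sum_nonneg fun i _ => (hpos _).le
    linarith
  by_cases hone : S.erase j = ∅
  · have hSeq : S = {j} := by
      ext i
      constructor
      · intro hi
        by_contra hne
        exact (Finset.notMem_empty i) (hone ▸ Finset.mem_erase.mpr ⟨by simpa using hne, hi⟩)
      · intro hi
        simpa using (Finset.mem_singleton.mp hi) ▸ hjS
    rw [hSeq]
    simp only [Finset.sum_singleton]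
    nlinarith [hpos (a j)]
  · have hne : (S.erase j).Nonempty := Finset.nonempty_iff_ne_empty.mpr hone
    have hstrict : φ (b j) < ∑ i ∈ S, φ (b i) := by
      rw [← Finset.add_sum_erase S _ hjS]
      have : 0 < ∑ i ∈ S.erase j, φ (b i) :=
        Finset.sum_pos (fun i _ => hpos _) hne
      linarith
    have : (S.card : ℝ) * φ (a j) ≤ (n : ℝ) * φ (a j) := by
      apply mul_le_mul_of_nonneg_right _ (hpos _).le
      exact_mod_cast hcard
    linarith

lemma trichotomy {n : ℕ} (a b : Fin n → ℤ) (hne : a ≠ b) :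
    ∃ j : Fin n, (∀ i : Fin n, i < j → a i = b i) ∧ a j ≠ b j := by
  have hT : (univ.filter (fun i => a i ≠ b i)).Nonempty := by
    rw [Finset.filter_nonempty_iff]
    by_contra h
    push_neg at h
    exact hne (funext fun i => by simpa using h i (mem_univ i))
  refine ⟨(univ.filter (fun i => a i ≠ b i)).min' hT, fun i hi => ?_, ?_⟩
  · by_contra h
    exact absurd (Finset.min'_le _ i (by simpa using h)) (not_le.mpr hi)
  · have := Finset.min'_mem _ hT
    simpa using this

theorem decMin_iff_min_sum {n : ℕ} (hn : 2 ≤ n) (φ : ℤ → ℝ)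
    (hφ : ∀ k : ℤ, (n : ℝ) * φ k ≤ φ (k + 1) ∧ 0 < φ k)
    (D : Set (Fin n → ℤ)) (hD : D.Nonempty) (m : Fin n → ℤ) (hm : m ∈ D) :
    DecMin D m ↔ ∀ y ∈ D, ∑ s : Fin n, φ (m s) ≤ ∑ s : Fin n, φ (y s) := by
  have hφ1 : ∀ k : ℤ, (n : ℝ) * φ k ≤ φ (k + 1) := fun k => (hφ k).1
  have hpos : ∀ k : ℤ, 0 < φ k := fun k => (hφ k).2
  have h2 : (2 : ℝ) ≤ (n : ℝ) := by exact_mod_cast hn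
  have hmono : ∀ k l : ℤ, k ≤ l → φ k ≤ φ l := by
    have := monotone_int_of_le_succ (f := φ) (fun l => le_trans (by nlinarith [hpos l]) (hφ1 l))
    exact fun k l hkl => this hkl
  have key : ∀ x y : Fin n → ℤ,
      (∃ j : Fin n, (∀ i : Fin n, i < j → sortDesc x i = sortDesc y i) ∧
        sortDesc x j < sortDesc y j) →
      ∑ s : Fin n, φ (x s) < ∑ s : Fin n, φ (y s) := by
    rintro x y ⟨j, hj1, hj2⟩
    rw [sortDesc_sum φ x, sortDesc_sum φ y]
    exact key_sum_lt hn φ hφ1 hpos hmono _ _ (fun i k h => sortDesc_anti x h) j hj1 hj2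
  constructor
  · rintro ⟨_, hdm⟩ y hy
    rcases hdm y hy with h | h
    · rw [sortDesc_sum φ m, sortDesc_sum φ y, h]
    · exact (key m y h).le
  · intro hmin
    refine ⟨hm, fun y hy => ?_⟩
    by_cases h : sortDesc m = sortDesc y
    · exact Or.inl h
    · obtain ⟨j, hj1, hj2⟩ := trichotomy _ _ h
      rcases lt_or_gt_of_ne hj2 with hlt | hgt
      · exact Or.inr ⟨j, hj1, hlt⟩
      · exact absurd (key y m ⟨j, fun i hi => (hj1 i hi).symm, hgt⟩)
          (not_lt.mpr (hmin y hy))
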